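/- Let m > 1, q ∈ (0,1) with m + q > 2, N ≥ 1, K > 0, ν = (m-1)/(m+q-2), μ = m+q-2. The planar vector field R(y,z) = ((m-1)y + Kz - y² - (2+Ny)·max(z,0)^ν, μ z (y - (2/(m-1))·max(z,0)^ν)) has exactly three zeros: P₀ = (0,0), P₁ = (m-1,0), and P₂ = (2 Z_K^ν/(m-1), Z_K), where Z_K = (K(m-1)²/(2[N(m-1)+2]))^{μ/(m-q)}. -/

import Mathlib

open Real Set

theorem stmt2 (m q K N μ ν ZK : ℝ)
    (hm : 1 < m) (hq0 : 0 < q) (hq1 : q < 1) (hmq : 2 < m + q)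
    (hN : 1 ≤ N) (hK : 0 < K)
    (hμ : μ = m + q - 2) (hν : ν = (m - 1) / μ)
    (hZK : ZK = (K * (m - 1) ^ 2 / (2 * (N * (m - 1) + 2))) ^ (μ / (m - q))) :
    {p : ℝ × ℝ |
        (m - 1) * p.1 + K * p.2 - p.1 ^ 2 - (2 + N * p.1) * (max p.2 0) ^ ν = 0 ∧
        μ * p.2 * (p.1 - (2 / (m - 1)) * (max p.2 0) ^ ν) = 0}
      = {((0 : ℝ), (0 : ℝ)), (m - 1, 0), (2 * ZK ^ ν / (m - 1), ZK)} := by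
  have hm1 : (0:ℝ) < m - 1 := by linarith
  have hm1' : m - 1 ≠ 0 := hm1.ne'
  have hμ0 : 0 < μ := by rw [hμ]; linarith
  have hμne : μ ≠ 0 := hμ0.ne'
  have hν0 : 0 < ν := by rw [hν]; positivity
  have hmq' : 0 < m - q := by linarith
  have hden : (0:ℝ) < 2 * (N * (m - 1) + 2) := by nlinarith
  set C := K * (m - 1) ^ 2 / (2 * (N * (m - 1) + 2)) with hCdef
  have hC : 0 < C := div_pos (by positivity) hden
  have ha : (2 * ν - 1) = (m - q) / μ := by
    rw [hν]; field_simp; linarith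
  have hmul : μ / (m - q) * (2 * ν - 1) = 1 := by
    rw [ha]; field_simp
  have hZKpos : 0 < ZK := by rw [hZK]; exact rpow_pos_of_pos hC _
  have hZKpow : ZK ^ (2 * ν - 1) = C := by
    rw [hZK, ← Real.rpow_mul hC.le, hmul, Real.rpow_one]
  have hww : ∀ z : ℝ, 0 < z → z ^ ν * z ^ ν = z ^ (2 * ν - 1) * z := by
    intro z hz
    calc z ^ ν * z ^ ν = z ^ (ν + ν) := (Real.rpow_add hz ν ν).symm
      _ = z ^ (2 * ν - 1 + 1) := by ring_nf
      _ = z ^ (2 * ν - 1) * z ^ (1:ℝ) := Real.rpow_add hz _ _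
      _ = z ^ (2 * ν - 1) * z := by rw [Real.rpow_one]
  ext ⟨y, z⟩
  simp only [Set.mem_setOf_eq, Set.mem_insert_iff, Set.mem_singleton_iff, Prod.mk.injEq]
  constructor
  · rintro ⟨h1, h2⟩
    rcases mul_eq_zero.mp h2 with h | hy
    · rcases mul_eq_zero.mp h with h | hz
      · exact absurd h hμ0.ne'
      · -- z = 0 case
        rw [hz, max_self, Real.zero_rpow hν0.ne'] at h1
        have hf : y * (m - 1 - y) = 0 := by nlinarith [h1]
        rcases mul_eq_zero.mp hf with h | h
        · exact Or.inl ⟨h, hz⟩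
        · exact Or.inr (Or.inl ⟨by linarith, hz⟩)
    · -- bracket = 0
      rcases le_or_gt z 0 with hz | hz
      · rw [max_eq_right hz, Real.zero_rpow hν0.ne'] at hy h1
        have hy0 : y = 0 := by linarith [hy]
        rw [hy0] at h1
        have hz0 : z = 0 := by
          have hKz : K * z = 0 := by nlinarith [h1]
          exact (mul_eq_zero.mp hKz).resolve_left hK.ne'
        exact Or.inl ⟨hy0, hz0⟩
      · rw [max_eq_left hz.le] at hy h1
        have hyv : y = 2 / (m - 1) * z ^ ν := by linarith [hy]
        have hw := hww z hz
        have hzpow : z ^ (2 * ν - 1) = C := by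
          rw [hyv] at h1
          field_simp at h1
          have hcz2 : (m - 1) * (z * (2 * (N * (m - 1) + 2) * z ^ (2 * ν - 1) - K * (m - 1) ^ 2)) = 0 := by
            linear_combination (-(m - 1)) * h1 - ((m - 1) * (2 * N * (m - 1) + 4)) * hw
          have hcz := (mul_eq_zero.mp hcz2).resolve_left hm1'
          have hbr := (mul_eq_zero.mp hcz).resolve_left hz.ne'
          rw [hCdef, eq_div_iff hden.ne']
          linarith [hbr]
        have hzZK : z = ZK := by
          have hzz : z = (z ^ (2 * ν - 1)) ^ (μ / (m - q)) := by
            rw [← Real.rpow_mul hz.le, mul_comm (2 * ν - 1), hmul, Real.rpow_one]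
          rw [hzz, hzpow, hZK]
        refine Or.inr (Or.inr ⟨?_, hzZK⟩)
        rw [hyv, hzZK]; ring
  · rintro (⟨hy, hz⟩ | ⟨hy, hz⟩ | ⟨hy, hz⟩)
    · rw [hy, hz]
      simp [Real.zero_rpow hν0.ne']
    · rw [hy, hz]
      constructor
      · simp only [max_self, Real.zero_rpow hν0.ne']
        ring
      · ring
    · rw [hy, hz]
      simp only [max_eq_left hZKpos.le]
      constructor
      · have hwC : 2 * (N * (m - 1) + 2) * (ZK ^ ν * ZK ^ ν) = K * (m - 1) ^ 2 * ZK := by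
          rw [hww ZK hZKpos, hZKpow, hCdef]
          field_simp
        field_simp
        linear_combination (-1 : ℝ) * hwC
      · ring
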